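/- Let p(z) = Σ_{j=0}^n a_j z^j with all coefficients a_j nonzero, n ≥ 3, and suppose that for j = 2,…,n−1 the triangle equality |a_n a_{j-2} − a_{n-1} a_{j-1} − a_{n-2} a_j| = |a_n a_{j-2}| + |a_{n-1} a_{j-1}| + |a_{n-2} a_j| holds, and also |a_{n-1} a_0 + a_{n-2} a_1| = |a_{n-1} a_0| + |a_{n-2} a_1|. Then, with φ_j = arg a_j and Δ = φ_{n-1} − φ_n + π, the arguments satisfy φ_j ≡ (n−j)Δ + φ_n − π (mod 2π) for j = 0,…,n−1. -/

import Mathlib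

open Complex

lemma tri3 {x y z : ℂ} (hx : x ≠ 0) (hy : y ≠ 0) (hz : z ≠ 0)
    (h : ‖x - y - z‖ = ‖x‖ + ‖y‖ + ‖z‖) :
    y.arg = z.arg ∧ (x.arg : Real.Angle) = (y.arg : Real.Angle) + Real.pi := by
  have hle : ‖x - (y + z)‖ ≤ ‖x‖ + ‖y + z‖ := norm_sub_le _ _
  have hx' : x - y - z = x - (y + z) := by ring
  rw [hx'] at h; rw [h] at hle
  have hyz : ‖y + z‖ = ‖y‖ + ‖z‖ :=
    le_antisymm (norm_add_le _ _) (by linarith)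
  have hray_yz : SameRay ℝ y z := sameRay_iff_norm_add.mpr hyz
  have hargyz : y.arg = z.arg := by
    rcases Complex.sameRay_iff.mp hray_yz with h' | h' | h' <;> tauto
  have hyzne : y + z ≠ 0 := by
    intro h0
    rw [h0, norm_zero] at hyz
    have := norm_pos_iff.mpr hy
    have := norm_pos_iff.mpr hz
    linarith
  have harg_sum : (y + z).arg = y.arg := by
    have : SameRay ℝ (y + z) y :=
      SameRay.add_left (SameRay.refl _) hray_yz.symm
    rcases Complex.sameRay_iff.mp this with h' | h' | h' <;> tauto
  have hxeq : ‖x + -(y + z)‖ = ‖x‖ + ‖-(y + z)‖ := by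
    rw [norm_neg, ← sub_eq_add_neg]
    rw [h, hyz]; ring
  have hray_x : SameRay ℝ x (-(y + z)) := sameRay_iff_norm_add.mpr hxeq
  have hargx : x.arg = (-(y + z)).arg := by
    rcases Complex.sameRay_iff.mp hray_x with h' | h' | h' <;>
      first | tauto | (exfalso; exact (neg_ne_zero.mpr hyzne) h')
  refine ⟨hargyz, ?_⟩
  rw [hargx, Complex.arg_neg_coe_angle hyzne, harg_sum]

theorem triangle_equalities_force_argument_progression
    (n : ℕ) (a : ℕ → ℂ) (hn : 3 ≤ n) (ha : ∀ j ≤ n, a j ≠ 0)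
    (h1 : ∀ j, 2 ≤ j → j ≤ n - 1 →
      ‖a n * a (j - 2) - a (n - 1) * a (j - 1) - a (n - 2) * a j‖
        = ‖a n * a (j - 2)‖ + ‖a (n - 1) * a (j - 1)‖
          + ‖a (n - 2) * a j‖)
    (h2 : ‖a (n - 1) * a 0 + a (n - 2) * a 1‖
        = ‖a (n - 1) * a 0‖ + ‖a (n - 2) * a 1‖) :
    ∀ j ≤ n - 1, ∃ m : ℤ,
      (a j).arg = ((n - j : ℕ) : ℝ) * ((a (n - 1)).arg - (a n).arg + Real.pi)
        + (a n).arg - Real.pi + 2 * Real.pi * m := by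
  set θ : ℕ → Real.Angle := fun j => ((a j).arg : Real.Angle) with hθ
  set D : Real.Angle := θ (n-1) - θ n + (Real.pi : ℝ) with hD
  -- key step relations
  have key : ∀ k ≤ n - 2, θ k = θ (k+1) + D := by
    have keyA : ∀ k ≤ n - 3, θ k = θ (k+1) + D := by
      intro k hk
      have hj1 : 2 ≤ k + 2 := by omega
      have hj2 : k + 2 ≤ n - 1 := by omega
      have e1 : k + 2 - 2 = k := by omega
      have e2 : k + 2 - 1 = k + 1 := by omega
      have h := h1 (k+2) hj1 hj2
      rw [e1, e2] at h
      have h3 := (tri3 (mul_ne_zero (ha n le_rfl) (ha k (by omega)))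
        (mul_ne_zero (ha (n-1) (by omega)) (ha (k+1) (by omega)))
        (mul_ne_zero (ha (n-2) (by omega)) (ha (k+2) (by omega))) h).2
      rw [Complex.arg_mul_coe_angle (ha n le_rfl) (ha k (by omega)),
        Complex.arg_mul_coe_angle (ha (n-1) (by omega)) (ha (k+1) (by omega))] at h3
      -- h3 : θ n + θ k = θ (n-1) + θ (k+1) + π
      have hk' : θ k = (θ n + θ k) - θ n := by abel
      rw [hD, hk', h3]
      abel
    intro k hk
    rcases Nat.lt_or_ge k (n-2) with hlt | hge
    · exact keyA k (by omega)
    · -- k = n - 2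
      have hk2 : k = n - 2 := by omega
      subst hk2
      have h01 : θ 0 = θ 1 + D := keyA 0 (by omega)
      have hh2 : ((a (n-1) * a 0).arg : Real.Angle) = ((a (n-2) * a 1).arg : Real.Angle) := by
        have hy := mul_ne_zero (ha (n-1) (by omega)) (ha 0 (by omega))
        have hz := mul_ne_zero (ha (n-2) (by omega)) (ha 1 (by omega))
        have hray : SameRay ℝ (a (n-1) * a 0) (a (n-2) * a 1) := by
          apply sameRay_iff_norm_add.mpr
          exact h2
        rcases Complex.sameRay_iff.mp hray with h' | h' | h' <;> first | tauto | (rw [h'])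
      rw [Complex.arg_mul_coe_angle (ha (n-1) (by omega)) (ha 0 (by omega)),
        Complex.arg_mul_coe_angle (ha (n-2) (by omega)) (ha 1 (by omega))] at hh2
      -- hh2 : θ (n-1) + θ 0 = θ (n-2) + θ 1
      have e : n - 2 + 1 = n - 1 := by omega
      rw [e]
      -- goal : θ (n-2) = θ (n-1) + D
      have hc : θ (n-1) + (θ 1 + D) = θ (n-2) + θ 1 := by rw [← h01]; exact hh2
      have h' : θ (n-2) = (θ (n-2) + θ 1) - θ 1 := by abel
      rw [h', ← hc]
      abel
  -- downward induction
  have ind : ∀ i ≤ n - 1, θ (n - 1 - i) = i • D + θ (n-1) := by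
    intro i
    induction i with
    | zero => intro _; simp
    | succ i ih =>
      intro hi
      have h1' : n - 1 - (i+1) = n - 2 - i := by omega
      have h2' : n - 2 - i + 1 = n - 1 - i := by omega
      rw [h1', key (n-2-i) (by omega), h2', ih (by omega), succ_nsmul]
      abel
  intro j hj
  have hi : n - 1 - (n - 1 - j) = j := by omega
  have hθj : θ j = (n - 1 - j) • D + θ (n-1) := by
    have := ind (n-1-j) (by omega)
    rwa [hi] at this
  -- convert to real statement
  have hcast : ((((n - j : ℕ) : ℝ) * ((a (n - 1)).arg - (a n).arg + Real.pi)
      + (a n).arg - Real.pi : ℝ) : Real.Angle) = θ j := by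
    have hnj : (n - j : ℕ) = (n - 1 - j) + 1 := by omega
    rw [← nsmul_eq_mul]
    push_cast [Real.Angle.coe_add, Real.Angle.coe_sub, Real.Angle.coe_nsmul]
    rw [hnj, hθj, hD, hθ]
    rw [succ_nsmul]
    abel
  have := Real.Angle.angle_eq_iff_two_pi_dvd_sub.mp hcast
  obtain ⟨m, hm⟩ := this
  exact ⟨-m, by push_cast; linarith⟩
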